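/- Let d ∈ ℕ (d ≥ 1), γ ∈ [1,∞), C > 0 and let σ : ℝ^d → ℝ^d be continuously differentiable such that ‖(Dσ(x) − Dσ(x̃))y‖² ≤ C·(1+‖x‖+‖x̃‖)^{γ−3}·‖x−x̃‖²·‖y‖² for all x, x̃, y ∈ ℝ^d. Then there exists a constant C' > 0, depending only on C, γ, ‖σ(0)‖ and ‖Dσ(0)‖, such that for all x, x̃, y ∈ ℝ^d: ‖Dσ(x)y‖² ≤ C'·(1+‖x‖)^{γ−1}·‖y‖², ‖σ(x) − σ(x̃)‖² ≤ C'·(1+‖x‖+‖x̃‖)^{γ−1}·‖x−x̃‖², and ‖σ(x)‖² ≤ C'·(1+‖x‖)^{γ+1}. -/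

import Mathlib

set_option maxHeartbeats 1000000 in
/-- Consequences of the squared polynomial-Hölder condition on the derivative
of a diffusion coefficient column `σ`. -/
theorem diffusion_growth_of_deriv_difference_bound
    (d : ℕ) (hd : 1 ≤ d) (γ C : ℝ) (hγ : 1 ≤ γ) (hC : 0 < C)
    (σ : EuclideanSpace ℝ (Fin d) → EuclideanSpace ℝ (Fin d))
    (hσ : ContDiff ℝ 1 σ)
    (hbound : ∀ x xt y : EuclideanSpace ℝ (Fin d),
      ‖(fderiv ℝ σ x - fderiv ℝ σ xt) y‖ ^ 2
        ≤ C * (1 + ‖x‖ + ‖xt‖) ^ (γ - 3) * ‖x - xt‖ ^ 2 * ‖y‖ ^ 2) :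
    ∃ C' : ℝ, 0 < C' ∧
      ∀ x xt y : EuclideanSpace ℝ (Fin d),
        ‖fderiv ℝ σ x y‖ ^ 2 ≤ C' * (1 + ‖x‖) ^ (γ - 1) * ‖y‖ ^ 2 ∧
        ‖σ x - σ xt‖ ^ 2 ≤ C' * (1 + ‖x‖ + ‖xt‖) ^ (γ - 1) * ‖x - xt‖ ^ 2 ∧
        ‖σ x‖ ^ 2 ≤ C' * (1 + ‖x‖) ^ (γ + 1) := by
  set C1 : ℝ := 2 * ‖fderiv ℝ σ 0‖ ^ 2 + 2 * C with hC1def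
  have hC1 : 0 < C1 := by positivity
  -- Step 1: pointwise derivative bound with constant C1
  have h1 : ∀ x y : EuclideanSpace ℝ (Fin d),
      ‖fderiv ℝ σ x y‖ ^ 2 ≤ C1 * (1 + ‖x‖) ^ (γ - 1) * ‖y‖ ^ 2 := by
    intro x y
    have hxn : (0:ℝ) ≤ ‖x‖ := norm_nonneg x
    have hb1 : (1:ℝ) ≤ 1 + ‖x‖ := by linarith
    have hbpos : (0:ℝ) < 1 + ‖x‖ := by linarith
    have h2 := hbound x 0 y
    simp only [norm_zero, sub_zero, add_zero] at h2
    have hx2 : ‖x‖ ^ 2 ≤ (1 + ‖x‖) ^ 2 := by nlinarith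
    have hmul : (1 + ‖x‖) ^ (γ - 3) * ‖x‖ ^ 2 ≤ (1 + ‖x‖) ^ (γ - 1) := by
      calc (1 + ‖x‖) ^ (γ - 3) * ‖x‖ ^ 2
          ≤ (1 + ‖x‖) ^ (γ - 3) * (1 + ‖x‖) ^ (2:ℕ) :=
            mul_le_mul_of_nonneg_left hx2 (Real.rpow_nonneg hbpos.le _)
        _ = (1 + ‖x‖) ^ (γ - 1) := by
            rw [← Real.rpow_natCast (1 + ‖x‖) 2, ← Real.rpow_add hbpos]
            congr 1; ring
    have hdiff : ‖fderiv ℝ σ x y - fderiv ℝ σ 0 y‖ ^ 2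
        ≤ C * (1 + ‖x‖) ^ (γ - 1) * ‖y‖ ^ 2 := by
      have : ‖(fderiv ℝ σ x - fderiv ℝ σ 0) y‖ = ‖fderiv ℝ σ x y - fderiv ℝ σ 0 y‖ := by
        simp
      rw [this] at h2
      calc ‖fderiv ℝ σ x y - fderiv ℝ σ 0 y‖ ^ 2
          ≤ C * (1 + ‖x‖) ^ (γ - 3) * ‖x‖ ^ 2 * ‖y‖ ^ 2 := h2
        _ = C * ((1 + ‖x‖) ^ (γ - 3) * ‖x‖ ^ 2) * ‖y‖ ^ 2 := by ring
        _ ≤ C * (1 + ‖x‖) ^ (γ - 1) * ‖y‖ ^ 2 := by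
            have := mul_le_mul_of_nonneg_left hmul hC.le
            nlinarith [sq_nonneg ‖y‖]
    have h0y : ‖fderiv ℝ σ 0 y‖ ≤ ‖fderiv ℝ σ 0‖ * ‖y‖ :=
      (fderiv ℝ σ 0).le_opNorm y
    have hge1 : (1:ℝ) ≤ (1 + ‖x‖) ^ (γ - 1) := by
      calc (1:ℝ) = (1 + ‖x‖) ^ (0:ℝ) := (Real.rpow_zero _).symm
        _ ≤ (1 + ‖x‖) ^ (γ - 1) :=
            Real.rpow_le_rpow_of_exponent_le hb1 (by linarith)
    have htri : ‖fderiv ℝ σ x y‖ ≤ ‖fderiv ℝ σ 0 y‖ + ‖fderiv ℝ σ x y - fderiv ℝ σ 0 y‖ := by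
      have := norm_add_le (fderiv ℝ σ 0 y) (fderiv ℝ σ x y - fderiv ℝ σ 0 y)
      simpa using this
    have hb2 : ‖fderiv ℝ σ 0 y‖ ^ 2 ≤ ‖fderiv ℝ σ 0‖ ^ 2 * ‖y‖ ^ 2 := by
      nlinarith [norm_nonneg (fderiv ℝ σ 0 y), norm_nonneg y, norm_nonneg (fderiv ℝ σ 0)]
    have hA : ‖fderiv ℝ σ x y‖ ^ 2
        ≤ (‖fderiv ℝ σ 0 y‖ + ‖fderiv ℝ σ x y - fderiv ℝ σ 0 y‖) ^ 2 :=
      pow_le_pow_left₀ (norm_nonneg _) htri 2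
    nlinarith [hA, sq_nonneg (‖fderiv ℝ σ 0 y‖ - ‖fderiv ℝ σ x y - fderiv ℝ σ 0 y‖),
      mul_nonneg (sub_nonneg.2 hge1)
        (mul_nonneg (sq_nonneg ‖fderiv ℝ σ 0‖) (sq_nonneg ‖y‖)),
      mul_nonneg (sub_nonneg.2 hge1) (mul_nonneg hC.le (sq_nonneg ‖y‖))]
  -- Step 2: Lipschitz bound with constant C1
  have h2 : ∀ x xt : EuclideanSpace ℝ (Fin d),
      ‖σ x - σ xt‖ ^ 2 ≤ C1 * (1 + ‖x‖ + ‖xt‖) ^ (γ - 1) * ‖x - xt‖ ^ 2 := by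
    intro x xt
    have hB1 : (1:ℝ) ≤ 1 + ‖x‖ + ‖xt‖ := by
      have := norm_nonneg x; have := norm_nonneg xt; linarith
    have hBpos : (0:ℝ) < 1 + ‖x‖ + ‖xt‖ := by linarith
    set M : ℝ := Real.sqrt (C1 * (1 + ‖x‖ + ‖xt‖) ^ (γ - 1)) with hMdef
    have hMsq : M ^ 2 = C1 * (1 + ‖x‖ + ‖xt‖) ^ (γ - 1) :=
      Real.sq_sqrt (by positivity)
    have hlip : ‖σ x - σ xt‖ ≤ M * ‖x - xt‖ := by
      apply (convex_segment xt x).norm_image_sub_le_of_norm_fderiv_le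
        (fun z _ => (hσ.differentiable one_ne_zero).differentiableAt)
        ?_ (left_mem_segment ℝ xt x) (right_mem_segment ℝ xt x)
      intro z hz
      have hzn : ‖z‖ ≤ ‖x‖ + ‖xt‖ := by
        obtain ⟨u, v, hu, hv, huv, rfl⟩ := hz
        calc ‖u • xt + v • x‖ ≤ ‖u • xt‖ + ‖v • x‖ := norm_add_le _ _
          _ = u * ‖xt‖ + v * ‖x‖ := by
              rw [norm_smul, norm_smul, Real.norm_eq_abs, Real.norm_eq_abs,
                abs_of_nonneg hu, abs_of_nonneg hv]
          _ ≤ ‖x‖ + ‖xt‖ := by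
              nlinarith [norm_nonneg x, norm_nonneg xt]
      apply ContinuousLinearMap.opNorm_le_bound _ (Real.sqrt_nonneg _)
      intro y
      have hzy := h1 z y
      have hmono : (1 + ‖z‖) ^ (γ - 1) ≤ (1 + ‖x‖ + ‖xt‖) ^ (γ - 1) := by
        apply Real.rpow_le_rpow (by positivity) (by linarith) (by linarith)
      have hzy2 : ‖fderiv ℝ σ z y‖ ^ 2 ≤ (M * ‖y‖) ^ 2 := by
        have : C1 * (1 + ‖z‖) ^ (γ - 1) * ‖y‖ ^ 2
            ≤ C1 * (1 + ‖x‖ + ‖xt‖) ^ (γ - 1) * ‖y‖ ^ 2 :=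
          mul_le_mul_of_nonneg_right (mul_le_mul_of_nonneg_left hmono hC1.le) (sq_nonneg _)
        calc ‖fderiv ℝ σ z y‖ ^ 2 ≤ C1 * (1 + ‖z‖) ^ (γ - 1) * ‖y‖ ^ 2 := hzy
          _ ≤ C1 * (1 + ‖x‖ + ‖xt‖) ^ (γ - 1) * ‖y‖ ^ 2 := this
          _ = (M * ‖y‖) ^ 2 := by rw [mul_pow, hMsq]
      have hMy : 0 ≤ M * ‖y‖ := by positivity
      calc ‖fderiv ℝ σ z y‖ = Real.sqrt (‖fderiv ℝ σ z y‖ ^ 2) :=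
            (Real.sqrt_sq (norm_nonneg _)).symm
        _ ≤ Real.sqrt ((M * ‖y‖) ^ 2) := Real.sqrt_le_sqrt hzy2
        _ = M * ‖y‖ := Real.sqrt_sq hMy
    calc ‖σ x - σ xt‖ ^ 2 ≤ (M * ‖x - xt‖) ^ 2 := by
          apply pow_le_pow_left₀ (norm_nonneg _) hlip
      _ = C1 * (1 + ‖x‖ + ‖xt‖) ^ (γ - 1) * ‖x - xt‖ ^ 2 := by rw [mul_pow, hMsq]
  -- final constant
  refine ⟨2 * ‖σ 0‖ ^ 2 + 2 * C1, by positivity, fun x xt y => ?_⟩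
  have hxn : (0:ℝ) ≤ ‖x‖ := norm_nonneg x
  have hb1 : (1:ℝ) ≤ 1 + ‖x‖ := by linarith
  have hbpos : (0:ℝ) < 1 + ‖x‖ := by linarith
  have hC1le : C1 ≤ 2 * ‖σ 0‖ ^ 2 + 2 * C1 := by nlinarith [sq_nonneg ‖σ 0‖]
  refine ⟨?_, ?_, ?_⟩
  · have h := h1 x y
    have hr : (0:ℝ) ≤ (1 + ‖x‖) ^ (γ - 1) := Real.rpow_nonneg hbpos.le _
    calc ‖fderiv ℝ σ x y‖ ^ 2 ≤ C1 * (1 + ‖x‖) ^ (γ - 1) * ‖y‖ ^ 2 := h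
      _ = C1 * ((1 + ‖x‖) ^ (γ - 1) * ‖y‖ ^ 2) := by ring
      _ ≤ (2 * ‖σ 0‖ ^ 2 + 2 * C1) * ((1 + ‖x‖) ^ (γ - 1) * ‖y‖ ^ 2) :=
          mul_le_mul_of_nonneg_right hC1le (mul_nonneg hr (sq_nonneg _))
      _ = (2 * ‖σ 0‖ ^ 2 + 2 * C1) * (1 + ‖x‖) ^ (γ - 1) * ‖y‖ ^ 2 := by ring
  · have h := h2 x xt
    have hr : (0:ℝ) ≤ (1 + ‖x‖ + ‖xt‖) ^ (γ - 1) :=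
      Real.rpow_nonneg (by have := norm_nonneg xt; linarith) _
    calc ‖σ x - σ xt‖ ^ 2 ≤ C1 * (1 + ‖x‖ + ‖xt‖) ^ (γ - 1) * ‖x - xt‖ ^ 2 := h
      _ = C1 * ((1 + ‖x‖ + ‖xt‖) ^ (γ - 1) * ‖x - xt‖ ^ 2) := by ring
      _ ≤ (2 * ‖σ 0‖ ^ 2 + 2 * C1) * ((1 + ‖x‖ + ‖xt‖) ^ (γ - 1) * ‖x - xt‖ ^ 2) :=
          mul_le_mul_of_nonneg_right hC1le (mul_nonneg hr (sq_nonneg _))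
      _ = (2 * ‖σ 0‖ ^ 2 + 2 * C1) * (1 + ‖x‖ + ‖xt‖) ^ (γ - 1) * ‖x - xt‖ ^ 2 := by ring
  · have hx0 := h2 x 0
    simp only [norm_zero, sub_zero, add_zero] at hx0
    have hx2 : ‖x‖ ^ 2 ≤ (1 + ‖x‖) ^ 2 :=
      pow_le_pow_left₀ hxn (by linarith) 2
    have hmul : (1 + ‖x‖) ^ (γ - 1) * ‖x‖ ^ 2 ≤ (1 + ‖x‖) ^ (γ + 1) := by
      calc (1 + ‖x‖) ^ (γ - 1) * ‖x‖ ^ 2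
          ≤ (1 + ‖x‖) ^ (γ - 1) * (1 + ‖x‖) ^ (2:ℕ) :=
            mul_le_mul_of_nonneg_left hx2 (Real.rpow_nonneg hbpos.le _)
        _ = (1 + ‖x‖) ^ (γ + 1) := by
            rw [← Real.rpow_natCast (1 + ‖x‖) 2, ← Real.rpow_add hbpos]
            congr 1; ring
    have hge1 : (1:ℝ) ≤ (1 + ‖x‖) ^ (γ + 1) := by
      calc (1:ℝ) = (1 + ‖x‖) ^ (0:ℝ) := (Real.rpow_zero _).symm
        _ ≤ (1 + ‖x‖) ^ (γ + 1) :=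
            Real.rpow_le_rpow_of_exponent_le hb1 (by linarith)
    have htri : ‖σ x‖ ≤ ‖σ 0‖ + ‖σ x - σ 0‖ := by
      have := norm_add_le (σ 0) (σ x - σ 0)
      simpa using this
    have hD2 : ‖σ x - σ 0‖ ^ 2 ≤ C1 * (1 + ‖x‖) ^ (γ + 1) := by
      calc ‖σ x - σ 0‖ ^ 2 ≤ C1 * (1 + ‖x‖) ^ (γ - 1) * ‖x‖ ^ 2 := hx0
        _ = C1 * ((1 + ‖x‖) ^ (γ - 1) * ‖x‖ ^ 2) := by ring
        _ ≤ C1 * (1 + ‖x‖) ^ (γ + 1) := mul_le_mul_of_nonneg_left hmul hC1.le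
    have hA : ‖σ x‖ ^ 2 ≤ (‖σ 0‖ + ‖σ x - σ 0‖) ^ 2 :=
      pow_le_pow_left₀ (norm_nonneg _) htri 2
    have h2sq : (‖σ 0‖ + ‖σ x - σ 0‖) ^ 2 ≤ 2 * ‖σ 0‖ ^ 2 + 2 * ‖σ x - σ 0‖ ^ 2 := by
      nlinarith [sq_nonneg (‖σ 0‖ - ‖σ x - σ 0‖)]
    calc ‖σ x‖ ^ 2 ≤ (‖σ 0‖ + ‖σ x - σ 0‖) ^ 2 := hA
      _ ≤ 2 * ‖σ 0‖ ^ 2 + 2 * ‖σ x - σ 0‖ ^ 2 := h2sq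
      _ ≤ 2 * ‖σ 0‖ ^ 2 + 2 * (C1 * (1 + ‖x‖) ^ (γ + 1)) := by linarith
      _ ≤ 2 * ‖σ 0‖ ^ 2 * (1 + ‖x‖) ^ (γ + 1) + 2 * (C1 * (1 + ‖x‖) ^ (γ + 1)) := by
          linarith [mul_nonneg (sub_nonneg.2 hge1) (sq_nonneg ‖σ 0‖)]
      _ = (2 * ‖σ 0‖ ^ 2 + 2 * C1) * (1 + ‖x‖) ^ (γ + 1) := by ring
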